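/- Let S and Q be periodic sequences in ℝ, each with an m-point motif and a minimal period (l for S, l' for Q). Then there exist a > 0 and b ∈ ℝ with Q = {a·x + b : x ∈ S} (an orientation-preserving similarity) if and only if there exists s ∈ ZMod m such that (1/l')·D(Q) = σ_s((1/l)·D(S)). In other words, the normalized distance list (entries divided by the period) considered up to cyclic permutation is a complete invariant of periodic sequences up to orientation-preserving similarity. -/

import Mathlib

/-- A periodic sequence in `ℝ` with an `m`-point motif `p` and period `l`:
the set `{p i + l * j : i ∈ Fin m, j ∈ ℤ}` where `0 ≤ p 0 < p 1 < ⋯ < p (m-1) < l`. -/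
structure PSeq (m : ℕ) where
  m_pos : 0 < m
  l : ℝ
  l_pos : 0 < l
  p : Fin m → ℝ
  p_strict : StrictMono p
  p0_nonneg : 0 ≤ p ⟨0, m_pos⟩
  p_lt : ∀ i, p i < l

namespace PSeq

variable {m : ℕ}

/-- The set of points of the periodic sequence. -/
def pts (S : PSeq m) : Set ℝ := {x | ∃ (i : Fin m) (j : ℤ), x = S.p i + S.l * j}

/-- The period is minimal: the same set of points cannot be produced with a smaller period. -/
def IsMinimal (S : PSeq m) : Prop := ∀ (m' : ℕ) (T : PSeq m'), T.pts = S.pts → S.l ≤ T.l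

/-- The distance list `D` of the periodic sequence, indexed by `ZMod m`:
`D i = p (i+1) - p i` for `i < m - 1`, and `D (m-1) = (p 0 + l) - p (m-1)`. -/
noncomputable def D (S : PSeq m) : ZMod m → ℝ := fun i =>
  letI : NeZero m := ⟨S.m_pos.ne'⟩
  if h : i.val + 1 < m then S.p ⟨i.val + 1, h⟩ - S.p ⟨i.val, i.val_lt⟩
  else S.p ⟨0, S.m_pos⟩ + S.l - S.p ⟨i.val, i.val_lt⟩

end PSeq

/-- The cyclic shift `σ_s` acting on vectors indexed by `ZMod n`: `(σ_s v) i = v (i + s)`. -/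
def shiftVec {n : ℕ} (s : ZMod n) (v : ZMod n → ℝ) : ZMod n → ℝ := fun i => v (i + s)

/-- The reversal `ρ`: `(ρ v) i = v (m - 1 - i)` (note `m - 1 = -1` in `ZMod m`). -/
def revVec {n : ℕ} (v : ZMod n → ℝ) : ZMod n → ℝ := fun i => v (-1 - i)

namespace PSeqAux

open PSeq

variable {m : ℕ}

/-- The extended point function: enumerates the points of `S` in increasing order. -/
noncomputable def P (S : PSeq m) (n : ℤ) : ℝ :=
  S.p ⟨(n % (m : ℤ)).toNat, by
    have hm : (0:ℤ) < m := by exact_mod_cast S.m_pos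
    have h1 := Int.emod_nonneg n hm.ne'
    have h2 := Int.emod_lt_of_pos n hm
    omega⟩ + S.l * (((n / (m : ℤ)) : ℤ) : ℝ)

lemma P_add (S : PSeq m) (q : ℤ) (r : ℕ) (hr : r < m) :
    P S ((m : ℤ) * q + r) = S.p ⟨r, hr⟩ + S.l * q := by
  have hm : (0:ℤ) < m := by exact_mod_cast S.m_pos
  have h1 : ((m:ℤ) * q + r) % m = r := by
    rw [add_comm, Int.add_mul_emod_self_left,
      Int.emod_eq_of_lt (by positivity) (by exact_mod_cast hr)]
  have h2 : ((m:ℤ) * q + r) / m = q := by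
    rw [add_comm, Int.add_mul_ediv_left _ _ hm.ne',
      Int.ediv_eq_zero_of_lt (by positivity) (by exact_mod_cast hr), zero_add]
  simp only [P, h1, h2, Int.toNat_natCast]

lemma D_apply (S : PSeq m) (r : ℕ) (hr : r < m) :
    S.D ((r : ℕ) : ZMod m) =
      if h : r + 1 < m then S.p ⟨r + 1, h⟩ - S.p ⟨r, hr⟩
      else S.p ⟨0, S.m_pos⟩ + S.l - S.p ⟨r, hr⟩ := by
  haveI : NeZero m := ⟨S.m_pos.ne'⟩
  have hval : ((r : ZMod m)).val = r := ZMod.val_natCast_of_lt hr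
  simp only [D, hval]

lemma D_pos (S : PSeq m) (i : ZMod m) : 0 < S.D i := by
  haveI : NeZero m := ⟨S.m_pos.ne'⟩
  simp only [D]
  split_ifs with h
  · have := S.p_strict (show (⟨i.val, i.val_lt⟩ : Fin m) < ⟨i.val + 1, h⟩ by
      simp [Fin.lt_def])
    linarith
  · have := S.p_lt ⟨i.val, i.val_lt⟩
    have := S.p0_nonneg
    linarith

lemma P_gap (S : PSeq m) (n : ℤ) : P S (n + 1) = P S n + S.D ((n : ℤ) : ZMod m) := by
  haveI : NeZero m := ⟨S.m_pos.ne'⟩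
  have hm : (0:ℤ) < m := by exact_mod_cast S.m_pos
  set q := n / (m : ℤ) with hq
  set r := (n % (m:ℤ)).toNat with hrdef
  have h1 := Int.emod_nonneg n hm.ne'
  have h2 := Int.emod_lt_of_pos n hm
  have hr : r < m := by omega
  have hn : n = (m:ℤ) * q + r := by
    rw [hrdef, Int.toNat_of_nonneg h1, hq]
    exact (Int.mul_ediv_add_emod n (m:ℤ)).symm
  have hcast : ((n : ℤ) : ZMod m) = ((r : ℕ) : ZMod m) := by
    rw [hn]; push_cast; simp
  rw [hcast, D_apply S r hr, hn]
  by_cases h : r + 1 < m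
  · have e1 : (m:ℤ) * q + r + 1 = (m:ℤ) * q + ((r + 1 : ℕ) : ℤ) := by push_cast; ring
    rw [e1, P_add S q (r+1) h, P_add S q r hr, dif_pos h]
    ring
  · have hrm : r = m - 1 := by omega
    have e1 : (m:ℤ) * q + r + 1 = (m:ℤ) * (q + 1) + ((0 : ℕ) : ℤ) := by
      have h5 : (r : ℤ) = (m : ℤ) - 1 := by omega
      rw [h5]; ring
    rw [e1, P_add S (q+1) 0 S.m_pos, P_add S q r hr, dif_neg h]
    push_cast
    ring

lemma P_strictMono (S : PSeq m) : StrictMono (P S) := by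
  apply strictMono_int_of_lt_succ
  intro n
  rw [P_gap]
  have := D_pos S ((n : ℤ) : ZMod m)
  linarith

lemma P_periodic (S : PSeq m) (n : ℤ) : P S (n + m) = P S n + S.l := by
  have hm : (0:ℤ) < m := by exact_mod_cast S.m_pos
  have h1 := Int.emod_nonneg n hm.ne'
  have h2 := Int.emod_lt_of_pos n hm
  set q := n / (m : ℤ) with hq
  set r := (n % (m:ℤ)).toNat with hrdef
  have hr : r < m := by omega
  have hn : n = (m:ℤ) * q + r := by
    rw [hrdef, Int.toNat_of_nonneg h1, hq]
    exact (Int.mul_ediv_add_emod n (m:ℤ)).symm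
  have e1 : n + m = (m:ℤ) * (q + 1) + r := by rw [hn]; ring
  rw [e1, hn, P_add S (q+1) r hr, P_add S q r hr]
  push_cast
  ring

lemma range_P (S : PSeq m) : Set.range (P S) = S.pts := by
  ext x
  constructor
  · rintro ⟨n, rfl⟩
    have hm : (0:ℤ) < m := by exact_mod_cast S.m_pos
    have h1 := Int.emod_nonneg n hm.ne'
    have h2 := Int.emod_lt_of_pos n hm
    set q := n / (m : ℤ) with hq
    set r := (n % (m:ℤ)).toNat with hrdef
    have hr : r < m := by omega
    have hn : n = (m:ℤ) * q + r := by
      rw [hrdef, Int.toNat_of_nonneg h1, hq]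
      exact (Int.mul_ediv_add_emod n (m:ℤ)).symm
    rw [hn, P_add S q r hr]
    exact ⟨⟨r, hr⟩, q, rfl⟩
  · rintro ⟨i, j, rfl⟩
    refine ⟨(m:ℤ) * j + i.val, ?_⟩
    rw [P_add S j i.val i.isLt]

/-- A strictly monotone surjective map `ℤ → ℤ` is a translation. -/
lemma strictMono_int_eq_add (h : ℤ → ℤ) (hm : StrictMono h)
    (hs : Function.Surjective h) : ∀ n, h n = n + h 0 := by
  have hstep : ∀ n, h (n + 1) = h n + 1 := by
    intro n
    obtain ⟨k, hk⟩ := hs (h n + 1)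
    have h1 : h n < h (n + 1) := hm (by omega)
    rcases le_or_gt k n with hkn | hkn
    · have := hm.monotone hkn; omega
    · have : n + 1 ≤ k := by omega
      have := hm.monotone this; omega
  intro n
  induction n using Int.induction_on with
  | zero => omega
  | succ k ih => rw [hstep]; omega
  | pred k ih =>
    have := hstep (-(k:ℤ) - 1)
    have e : -(k:ℤ) - 1 + 1 = -(k:ℤ) := by ring
    rw [e] at this
    omega

/-- Two strictly monotone maps `ℤ → ℝ` with the same range differ by an index shift. -/
lemma exists_index_shift {f g : ℤ → ℝ} (hf : StrictMono f) (hg : StrictMono g)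
    (hr : Set.range f = Set.range g) : ∃ t : ℤ, ∀ n, g n = f (n + t) := by
  have hex : ∀ n : ℤ, ∃ k : ℤ, f k = g n := by
    intro n
    have : g n ∈ Set.range f := hr ▸ Set.mem_range_self n
    exact this
  choose h hh using hex
  have hmono : StrictMono h := by
    intro a b hab
    have : f (h a) < f (h b) := by rw [hh a, hh b]; exact hg hab
    exact hf.lt_iff_lt.mp this
  have hsurj : Function.Surjective h := by
    intro k
    have : f k ∈ Set.range g := hr ▸ Set.mem_range_self k
    obtain ⟨n, hn⟩ := this
    exact ⟨n, hf.injective (by rw [hh n, hn])⟩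
  refine ⟨h 0, fun n => ?_⟩
  rw [← hh n, strictMono_int_eq_add h hmono hsurj n]

end PSeqAux

open PSeqAux

/-- the normalized distance list up to cyclic permutation is a complete
invariant of periodic sequences up to orientation-preserving similarity. -/
theorem normalized_distance_list_complete_up_to_oriented_similarity {m : ℕ}
    (S Q : PSeq m) (hS : S.IsMinimal) (hQ : Q.IsMinimal) :
    (∃ (a b : ℝ), 0 < a ∧ Q.pts = (fun x => a * x + b) '' S.pts) ↔
    ∃ s : ZMod m, (1 / Q.l) • Q.D = shiftVec s ((1 / S.l) • S.D) := by
  haveI : NeZero m := ⟨S.m_pos.ne'⟩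
  constructor
  · rintro ⟨a, b, ha, himg⟩
    -- the two enumerations of Q.pts differ by an index shift
    have hfm : StrictMono (fun n => a * P S n + b) := by
      intro x y hxy
      have := P_strictMono S hxy
      dsimp
      nlinarith
    have hrange : Set.range (fun n => a * P S n + b) = Set.range (P Q) := by
      rw [range_P Q, himg, ← range_P S, ← Set.range_comp]
      rfl
    obtain ⟨t, ht⟩ := exists_index_shift hfm (P_strictMono Q) hrange
    -- period relation : Q.l = a * S.l
    have hl : Q.l = a * S.l := by
      have h1 : P Q ((0:ℤ) + m) = P Q 0 + Q.l := P_periodic Q 0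
      have h2 : P S (t + m) = P S t + S.l := P_periodic S t
      have h3 := ht 0
      have h4 := ht ((m:ℤ))
      have e : (m:ℤ) + t = t + m := by ring
      rw [e, h2] at h4
      rw [zero_add] at h1
      rw [h4, h3] at h1
      simp only [zero_add] at h1
      linarith
    -- distance relation
    have hD : ∀ n : ℤ, Q.D ((n : ℤ) : ZMod m) = a * S.D (((n + t : ℤ)) : ZMod m) := by
      intro n
      have g1 : P Q (n + 1) = P Q n + Q.D ((n : ℤ) : ZMod m) := P_gap Q n
      have g2 : P S (n + t + 1) = P S (n + t) + S.D (((n + t : ℤ)) : ZMod m) :=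
        P_gap S (n + t)
      have h3 := ht n
      have h4 := ht (n + 1)
      have e : n + 1 + t = n + t + 1 := by ring
      rw [e, g2] at h4
      rw [g1, h3] at h4
      linarith
    refine ⟨((t : ℤ) : ZMod m), ?_⟩
    funext i
    obtain ⟨n, rfl⟩ := ZMod.intCast_surjective i
    have hQl : Q.l ≠ 0 := Q.l_pos.ne'
    have hSl : S.l ≠ 0 := S.l_pos.ne'
    have ha' : a ≠ 0 := ha.ne'
    simp only [Pi.smul_apply, smul_eq_mul, shiftVec]
    have ec : (((n + t : ℤ)) : ZMod m) = ((n : ℤ) : ZMod m) + ((t : ℤ) : ZMod m) := by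
      push_cast; ring
    rw [hD n, ec, hl]
    field_simp
  · rintro ⟨s, hs⟩
    set a : ℝ := Q.l / S.l with hadef
    have ha : 0 < a := div_pos Q.l_pos S.l_pos
    have hSl : S.l ≠ 0 := S.l_pos.ne'
    have hQl : Q.l ≠ 0 := Q.l_pos.ne'
    have hD : ∀ i : ZMod m, Q.D i = a * S.D (i + s) := by
      intro i
      have := congrFun hs i
      simp only [Pi.smul_apply, smul_eq_mul, shiftVec] at this
      field_simp [hadef] at this ⊢
      rw [hadef]; field_simp; linarith
    set t : ℤ := (s.val : ℤ) with htdef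
    have hts : ((t : ℤ) : ZMod m) = s := by
      simp [htdef]
    set b : ℝ := P Q 0 - a * P S t with hbdef
    have key : ∀ n : ℤ, P Q n = a * P S (n + t) + b := by
      have step : ∀ n : ℤ, P Q (n + 1) - P Q n = a * (P S (n + t + 1) - P S (n + t)) := by
        intro n
        rw [P_gap Q n, P_gap S (n + t)]
        have ec : (((n + t : ℤ)) : ZMod m) = ((n : ℤ) : ZMod m) + s := by
          rw [← hts]; push_cast; ring
        rw [ec]
        rw [hD ((n : ℤ) : ZMod m)]
        ring
      intro n
      induction n using Int.induction_on with
      | zero => simp [hbdef]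
      | succ k ih =>
        have := step k
        have e : (k : ℤ) + 1 + t = k + t + 1 := by ring
        rw [e]
        linarith
      | pred k ih =>
        have := step (-(k:ℤ) - 1)
        have e1 : -(k:ℤ) - 1 + 1 = -(k:ℤ) := by ring
        rw [e1] at this
        have e2 : -(k:ℤ) - 1 + t = -(k:ℤ) + t - 1 := by ring
        have e3 : -(k:ℤ) + t - 1 + 1 = -(k:ℤ) + t := by ring
        rw [e2] at this ⊢
        rw [e3] at this
        linarith
    refine ⟨a, b, ha, ?_⟩
    rw [← range_P Q, ← range_P S]
    ext x
    constructor
    · rintro ⟨n, rfl⟩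
      exact ⟨P S (n + t), Set.mem_range_self _, by rw [key n]⟩
    · rintro ⟨y, ⟨n, rfl⟩, rfl⟩
      refine ⟨n - t, ?_⟩
      rw [key (n - t)]
      simp
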